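/- Let m, n be positive integers, C ∈ ℝ^{m×n}, ε > 0, and K_{ij} = exp(-C_{ij}/ε). Let a ∈ ℝ^m have strictly positive entries and b^d, b^u ∈ ℝ^n satisfy 0 ≤ b^d ≤ b^u and b^u > 0 entrywise. Suppose u ∈ ℝ^m with u > 0 and q, v ∈ ℝ^n with q, v > 0 satisfy the fixed-point equations u = a / (K(q⊙v)), q = max( b^d / ((Kᵀu)⊙v), 1_n ), and v = min( b^u / ((Kᵀu)⊙q), 1_n ) (all operations entrywise). Then P = diag(u)·K·diag(q⊙v) lies in C(a,b^u,b^d) and is the unique minimizer of ⟨C,P'⟩ - εH(P') over P' ∈ C(a,b^u,b^d). -/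

import Mathlib

open Real

lemma entgap_nonneg {x y : ℝ} (hx : 0 < x) (hy : 0 ≤ y) :
    0 ≤ y * Real.log y - y * Real.log x - y + x := by
  rcases eq_or_lt_of_le hy with h | h
  · rw [← h]; simp; linarith
  · have hxy : 0 < x / y := div_pos hx h
    have h1 := Real.log_le_sub_one_of_pos hxy
    have hlog : Real.log (x / y) = Real.log x - Real.log y := Real.log_div hx.ne' h.ne'
    rw [hlog] at h1
    have h2 : y * (Real.log x - Real.log y) ≤ y * (x / y - 1) :=
      mul_le_mul_of_nonneg_left h1 h.le
    have h3 : y * (x / y - 1) = x - y := by field_simp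
    nlinarith

lemma entgap_pos {x y : ℝ} (hx : 0 < x) (hy : 0 ≤ y) (hne : y ≠ x) :
    0 < y * Real.log y - y * Real.log x - y + x := by
  rcases eq_or_lt_of_le hy with h | h
  · rw [← h]; simp; linarith
  · have hxy : 0 < x / y := div_pos hx h
    have hne1 : x / y ≠ 1 := by
      intro hc
      exact hne (by field_simp at hc; linarith)
    have h1 := Real.log_lt_sub_one_of_pos hxy hne1
    have hlog : Real.log (x / y) = Real.log x - Real.log y := Real.log_div hx.ne' h.ne'
    rw [hlog] at h1
    have h2 : y * (Real.log x - Real.log y) < y * (x / y - 1) :=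
      mul_lt_mul_of_pos_left h1 h
    have h3 : y * (x / y - 1) = x - y := by field_simp
    nlinarith

/-- if positive scaling vectors (u, q, v) satisfy the
Sinkhorn-Knopp fixed-point equations of DB-OT, then P = diag(u)·K·diag(q⊙v) is
feasible and is the unique minimizer of the entropic DB-OT objective. -/
theorem dbot_sinkhorn_fixed_point_optimal
    (m n : ℕ) (hm : 0 < m) (hn : 0 < n)
    (C : Matrix (Fin m) (Fin n) ℝ) (ε : ℝ) (hε : 0 < ε)
    (K : Matrix (Fin m) (Fin n) ℝ)
    (hK : ∀ i j, K i j = Real.exp (-(C i j) / ε))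
    (a : Fin m → ℝ) (ha : ∀ i, 0 < a i)
    (bd bu : Fin n → ℝ) (hbd : ∀ j, 0 ≤ bd j) (hdu : ∀ j, bd j ≤ bu j)
    (hbu : ∀ j, 0 < bu j)
    (S : Set (Matrix (Fin m) (Fin n) ℝ))
    (hS : S = {P | (∀ i j, 0 ≤ P i j) ∧ (∀ i, ∑ j, P i j = a i) ∧
            (∀ j, bd j ≤ ∑ i, P i j) ∧ (∀ j, ∑ i, P i j ≤ bu j)})
    (u : Fin m → ℝ) (hu : ∀ i, 0 < u i)
    (q v : Fin n → ℝ) (hq : ∀ j, 0 < q j) (hv : ∀ j, 0 < v j)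
    (hfixu : ∀ i, u i = a i / (∑ j, K i j * (q j * v j)))
    (hfixq : ∀ j, q j = max (bd j / ((∑ i, K i j * u i) * v j)) 1)
    (hfixv : ∀ j, v j = min (bu j / ((∑ i, K i j * u i) * q j)) 1)
    (P : Matrix (Fin m) (Fin n) ℝ)
    (hP : ∀ i j, P i j = u i * K i j * (q j * v j)) :
    P ∈ S ∧
    IsMinOn (fun P' : Matrix (Fin m) (Fin n) ℝ =>
        (∑ i, ∑ j, C i j * P' i j) -
          ε * (-(∑ i, ∑ j, P' i j * (Real.log (P' i j) - 1)))) S P ∧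
    (∀ P' ∈ S,
      IsMinOn (fun P' : Matrix (Fin m) (Fin n) ℝ =>
        (∑ i, ∑ j, C i j * P' i j) -
          ε * (-(∑ i, ∑ j, P' i j * (Real.log (P' i j) - 1)))) S P' → P' = P) := by
  have : Nonempty (Fin m) := ⟨⟨0, hm⟩⟩
  have : Nonempty (Fin n) := ⟨⟨0, hn⟩⟩
  have hKpos : ∀ i j, 0 < K i j := fun i j => (hK i j) ▸ Real.exp_pos _
  have hTpos : ∀ i, 0 < ∑ j, K i j * (q j * v j) := fun i =>
    Finset.sum_pos (fun j _ => mul_pos (hKpos i j) (mul_pos (hq j) (hv j)))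
      Finset.univ_nonempty
  have hspos : ∀ j, 0 < ∑ i, K i j * u i := fun j =>
    Finset.sum_pos (fun i _ => mul_pos (hKpos i j) (hu i)) Finset.univ_nonempty
  have hPpos : ∀ i j, 0 < P i j := fun i j => by
    rw [hP i j]; exact mul_pos (mul_pos (hu i) (hKpos i j)) (mul_pos (hq j) (hv j))
  have hrow : ∀ i, ∑ j, P i j = a i := by
    intro i
    have h1 : ∑ j, P i j = u i * ∑ j, K i j * (q j * v j) := by
      rw [Finset.mul_sum]
      exact Finset.sum_congr rfl fun j _ => by rw [hP]; ring
    rw [h1, hfixu i, div_mul_cancel₀ _ (hTpos i).ne']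
  have hcol : ∀ j, ∑ i, P i j = (∑ i, K i j * u i) * (q j * v j) := by
    intro j
    rw [Finset.sum_mul]
    exact Finset.sum_congr rfl fun i _ => by rw [hP]; ring
  have hqge1 : ∀ j, 1 ≤ q j := fun j => (hfixq j) ▸ le_max_right _ _
  have hvle1 : ∀ j, v j ≤ 1 := fun j => (hfixv j) ▸ min_le_right _ _
  have hcle : ∀ j, ∑ i, P i j ≤ bu j := by
    intro j
    have h1 : v j ≤ bu j / ((∑ i, K i j * u i) * q j) := (hfixv j) ▸ min_le_left _ _
    have hpos : 0 < (∑ i, K i j * u i) * q j := mul_pos (hspos j) (hq j)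
    rw [hcol j]
    calc (∑ i, K i j * u i) * (q j * v j) = ((∑ i, K i j * u i) * q j) * v j := by ring
      _ ≤ ((∑ i, K i j * u i) * q j) * (bu j / ((∑ i, K i j * u i) * q j)) :=
          mul_le_mul_of_nonneg_left h1 hpos.le
      _ = bu j := (mul_comm _ _).trans (div_mul_cancel₀ _ hpos.ne')
  have hcge : ∀ j, bd j ≤ ∑ i, P i j := by
    intro j
    have h1 : bd j / ((∑ i, K i j * u i) * v j) ≤ q j := (hfixq j) ▸ le_max_left _ _
    have hpos : 0 < (∑ i, K i j * u i) * v j := mul_pos (hspos j) (hv j)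
    rw [hcol j]
    calc bd j = ((∑ i, K i j * u i) * v j) * (bd j / ((∑ i, K i j * u i) * v j)) :=
          (div_mul_cancel₀ _ hpos.ne').symm.trans (mul_comm _ _)
      _ ≤ ((∑ i, K i j * u i) * v j) * q j := mul_le_mul_of_nonneg_left h1 hpos.le
      _ = (∑ i, K i j * u i) * (q j * v j) := by ring
  have hcompl : ∀ j t, bd j ≤ t → t ≤ bu j →
      0 ≤ Real.log (q j * v j) * (t - ∑ i, P i j) := by
    intro j t h1 h2
    rcases lt_trichotomy (q j * v j) 1 with hlt | heq | hgt
    · have hvlt : v j < 1 := by nlinarith [hqge1 j, hv j]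
      have hveq : v j = bu j / ((∑ i, K i j * u i) * q j) := by
        rcases min_cases (bu j / ((∑ i, K i j * u i) * q j)) 1 with ⟨h, _⟩ | ⟨h, _⟩
        · rw [hfixv j, h]
        · rw [hfixv j, h] at hvlt; exact absurd hvlt (lt_irrefl 1)
      have hceq : ∑ i, P i j = bu j := by
        have hs' := (hspos j).ne'
        have hq' := (hq j).ne'
        rw [hcol j, hveq]
        field_simp
      rw [hceq]
      have hl : Real.log (q j * v j) ≤ 0 := Real.log_nonpos (mul_pos (hq j) (hv j)).le hlt.le
      nlinarith
    · rw [heq]; simp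
    · have hqgt : 1 < q j := by nlinarith [hvle1 j, hv j]
      have hqeq : q j = bd j / ((∑ i, K i j * u i) * v j) := by
        rcases max_cases (bd j / ((∑ i, K i j * u i) * v j)) 1 with ⟨h, _⟩ | ⟨h, _⟩
        · rw [hfixq j, h]
        · rw [hfixq j, h] at hqgt; exact absurd hqgt (lt_irrefl 1)
      have hceq : ∑ i, P i j = bd j := by
        have hs' := (hspos j).ne'
        have hv' := (hv j).ne'
        rw [hcol j, hqeq]
        field_simp
      rw [hceq]
      exact mul_nonneg (Real.log_nonneg hgt.le) (by linarith)
  have hfeas : P ∈ S := by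
    rw [hS]; exact ⟨fun i j => (hPpos i j).le, hrow, hcge, hcle⟩
  have hlogP : ∀ i j, Real.log (P i j)
      = Real.log (u i) + (-(C i j) / ε) + Real.log (q j * v j) := by
    intro i j
    rw [hP i j, Real.log_mul (mul_pos (hu i) (hKpos i j)).ne'
        (mul_pos (hq j) (hv j)).ne',
      Real.log_mul (hu i).ne' (hKpos i j).ne', hK i j, Real.log_exp]
  have hkey : ∀ P' : Matrix (Fin m) (Fin n) ℝ, (∀ i, ∑ j, P' i j = a i) →
      ((∑ i, ∑ j, C i j * P' i j) -
          ε * (-(∑ i, ∑ j, P' i j * (Real.log (P' i j) - 1))))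
        - ((∑ i, ∑ j, C i j * P i j) -
          ε * (-(∑ i, ∑ j, P i j * (Real.log (P i j) - 1))))
      = (∑ i, ∑ j, ε * (P' i j * Real.log (P' i j) - P' i j * Real.log (P i j)
            - P' i j + P i j))
        + ε * ∑ j, Real.log (q j * v j) * ((∑ i, P' i j) - (∑ i, P i j)) := by
    intro P' hrow'
    have hentry : ∀ i j,
        (C i j * P' i j + ε * (P' i j * (Real.log (P' i j) - 1)))
          - (C i j * P i j + ε * (P i j * (Real.log (P i j) - 1)))
        = ε * (P' i j * Real.log (P' i j) - P' i j * Real.log (P i j)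
            - P' i j + P i j)
          + ε * Real.log (u i) * (P' i j - P i j)
          + ε * Real.log (q j * v j) * (P' i j - P i j) := by
      intro i j
      rw [hlogP i j]
      field_simp
      ring
    have h1 : ∑ i, ∑ j, ε * Real.log (u i) * (P' i j - P i j) = 0 := by
      apply Finset.sum_eq_zero; intro i _
      rw [← Finset.mul_sum, Finset.sum_sub_distrib, hrow' i, hrow i, sub_self,
        mul_zero]
    have h2 : ∑ i, ∑ j, ε * Real.log (q j * v j) * (P' i j - P i j)
        = ε * ∑ j, Real.log (q j * v j) * ((∑ i, P' i j) - (∑ i, P i j)) := by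
      rw [Finset.sum_comm, Finset.mul_sum]
      refine Finset.sum_congr rfl fun j _ => ?_
      rw [← Finset.mul_sum, Finset.sum_sub_distrib]
      ring
    calc ((∑ i, ∑ j, C i j * P' i j) -
          ε * (-(∑ i, ∑ j, P' i j * (Real.log (P' i j) - 1))))
        - ((∑ i, ∑ j, C i j * P i j) -
          ε * (-(∑ i, ∑ j, P i j * (Real.log (P i j) - 1))))
        = ∑ i, ∑ j, ((C i j * P' i j + ε * (P' i j * (Real.log (P' i j) - 1)))
            - (C i j * P i j + ε * (P i j * (Real.log (P i j) - 1)))) := by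
          simp only [mul_neg, sub_neg_eq_add, Finset.mul_sum,
            ← Finset.sum_add_distrib, ← Finset.sum_sub_distrib]
      _ = ∑ i, ∑ j, (ε * (P' i j * Real.log (P' i j) - P' i j * Real.log (P i j)
            - P' i j + P i j)
          + ε * Real.log (u i) * (P' i j - P i j)
          + ε * Real.log (q j * v j) * (P' i j - P i j)) :=
          Finset.sum_congr rfl fun i _ => Finset.sum_congr rfl fun j _ => hentry i j
      _ = (∑ i, ∑ j, ε * (P' i j * Real.log (P' i j) - P' i j * Real.log (P i j)
            - P' i j + P i j))
          + (∑ i, ∑ j, ε * Real.log (u i) * (P' i j - P i j))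
          + (∑ i, ∑ j, ε * Real.log (q j * v j) * (P' i j - P i j)) := by
          simp only [Finset.sum_add_distrib]
      _ = _ := by rw [h1, h2, add_zero]
  have hminP : IsMinOn (fun P' : Matrix (Fin m) (Fin n) ℝ =>
      (∑ i, ∑ j, C i j * P' i j) -
        ε * (-(∑ i, ∑ j, P' i j * (Real.log (P' i j) - 1)))) S P := by
    rw [isMinOn_iff]
    intro P' hP'
    rw [hS] at hP'
    obtain ⟨h0, hr, hd, hup⟩ := hP'
    have hk := hkey P' hr
    have hE : 0 ≤ ∑ i, ∑ j, ε * (P' i j * Real.log (P' i j)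
        - P' i j * Real.log (P i j) - P' i j + P i j) :=
      Finset.sum_nonneg fun i _ => Finset.sum_nonneg fun j _ =>
        mul_nonneg hε.le (entgap_nonneg (hPpos i j) (h0 i j))
    have hB : 0 ≤ ∑ j, Real.log (q j * v j) * ((∑ i, P' i j) - ∑ i, P i j) :=
      Finset.sum_nonneg fun j _ => hcompl j _ (hd j) (hup j)
    have hB' := mul_nonneg hε.le hB
    apply sub_nonneg.mp
    show 0 ≤ ((∑ i, ∑ j, C i j * P' i j) -
          ε * (-(∑ i, ∑ j, P' i j * (Real.log (P' i j) - 1))))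
        - ((∑ i, ∑ j, C i j * P i j) -
          ε * (-(∑ i, ∑ j, P i j * (Real.log (P i j) - 1))))
    rw [hk]
    linarith
  refine ⟨hfeas, hminP, ?_⟩
  intro P' hP'S hminP'
  have h1 : ((∑ i, ∑ j, C i j * P' i j) -
          ε * (-(∑ i, ∑ j, P' i j * (Real.log (P' i j) - 1))))
        ≤ ((∑ i, ∑ j, C i j * P i j) -
          ε * (-(∑ i, ∑ j, P i j * (Real.log (P i j) - 1)))) :=
    isMinOn_iff.mp hminP' P hfeas
  have h2 : ((∑ i, ∑ j, C i j * P i j) -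
          ε * (-(∑ i, ∑ j, P i j * (Real.log (P i j) - 1))))
        ≤ ((∑ i, ∑ j, C i j * P' i j) -
          ε * (-(∑ i, ∑ j, P' i j * (Real.log (P' i j) - 1)))) :=
    isMinOn_iff.mp hminP P' hP'S
  rw [hS] at hP'S
  obtain ⟨h0, hr, hd, hup⟩ := hP'S
  have hk := hkey P' hr
  have hE : 0 ≤ ∑ i, ∑ j, ε * (P' i j * Real.log (P' i j)
      - P' i j * Real.log (P i j) - P' i j + P i j) :=
    Finset.sum_nonneg fun i _ => Finset.sum_nonneg fun j _ =>
      mul_nonneg hε.le (entgap_nonneg (hPpos i j) (h0 i j))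
  have hB : 0 ≤ ∑ j, Real.log (q j * v j) * ((∑ i, P' i j) - ∑ i, P i j) :=
    Finset.sum_nonneg fun j _ => hcompl j _ (hd j) (hup j)
  have hB' := mul_nonneg hε.le hB
  have hEzero : ∑ i, ∑ j, ε * (P' i j * Real.log (P' i j)
      - P' i j * Real.log (P i j) - P' i j + P i j) = 0 := by linarith
  have hz := (Finset.sum_eq_zero_iff_of_nonneg (fun i _ =>
    Finset.sum_nonneg fun j _ =>
      mul_nonneg hε.le (entgap_nonneg (hPpos i j) (h0 i j)))).mp hEzero
  ext i j
  by_contra hne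
  have hzij := (Finset.sum_eq_zero_iff_of_nonneg (fun j _ =>
    mul_nonneg hε.le (entgap_nonneg (hPpos i j) (h0 i j)))).mp
    (hz i (Finset.mem_univ i)) j (Finset.mem_univ j)
  have hpos := entgap_pos (hPpos i j) (h0 i j) hne
  nlinarith
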